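/- Fix λ ∈ ℂ \ {0}. Let a, b, c, d be holomorphic functions on a connected open set Ω ⊆ ℂ \ {0} satisfying λ·a' = b/z - c = -λ·d' and λ·b' = a - d = -λ·z·c'. Then b satisfies the third-order linear ODE (λ²/2)·b'''(z) + b(z)/z² - (2/z)·b'(z) = 0 on Ω. -/

import Mathlib

/-- For the system `λa' = b/z - c = -λd'` and `λb' = a - d = -λz·c'` on a
connected open `Ω ⊆ ℂ \ {0}` (with `λ ≠ 0`), the function `b` satisfies the third-order
ODE `(λ²/2)·b''' + b/z² - (2/z)·b' = 0` on `Ω`. -/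
theorem stmt4 (l : ℂ) (hl : l ≠ 0) (Ω : Set ℂ) (hΩ : IsOpen Ω) (hΩconn : IsConnected Ω)
    (h0 : (0 : ℂ) ∉ Ω) (a b c d : ℂ → ℂ)
    (ha : DifferentiableOn ℂ a Ω) (hb : DifferentiableOn ℂ b Ω)
    (hc : DifferentiableOn ℂ c Ω) (hd : DifferentiableOn ℂ d Ω)
    (e1 : ∀ z ∈ Ω, l * deriv a z = b z / z - c z)
    (e2 : ∀ z ∈ Ω, l * deriv d z = -(b z / z - c z))
    (e3 : ∀ z ∈ Ω, l * deriv b z = a z - d z)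
    (e4 : ∀ z ∈ Ω, l * z * deriv c z = -(a z - d z)) :
    ∀ z ∈ Ω, l ^ 2 / 2 * deriv (deriv (deriv b)) z + b z / z ^ 2
        - (2 / z) * deriv b z = 0 := by
  have hb1 : ∀ w ∈ Ω, deriv b w = (a w - d w) / l := by
    intro w hw
    rw [eq_div_iff hl, mul_comm]
    exact e3 w hw
  have hb2 : ∀ w ∈ Ω, deriv (deriv b) w = 2 * (b w / w - c w) / l ^ 2 := by
    intro w hw
    have heq : deriv b =ᶠ[nhds w] fun u => (a u - d u) / l := by
      filter_upwards [hΩ.mem_nhds hw] with u hu using hb1 u hu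
    rw [heq.deriv_eq]
    have haw : DifferentiableAt ℂ a w := ha.differentiableAt (hΩ.mem_nhds hw)
    have hdw : DifferentiableAt ℂ d w := hd.differentiableAt (hΩ.mem_nhds hw)
    rw [deriv_div_const, deriv_fun_sub haw hdw]
    have h1 : deriv a w = (b w / w - c w) / l := by
      rw [eq_div_iff hl, mul_comm]; exact e1 w hw
    have h2 : deriv d w = -(b w / w - c w) / l := by
      rw [eq_div_iff hl, mul_comm]; exact e2 w hw
    rw [h1, h2]
    field_simp
    ring
  intro z hz
  have hzne : z ≠ 0 := fun h => h0 (h ▸ hz)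
  have hmem : Ω ∈ nhds z := hΩ.mem_nhds hz
  have hbz : DifferentiableAt ℂ b z := hb.differentiableAt hmem
  have heq2 : deriv (deriv b) =ᶠ[nhds z] fun u => 2 * (b u / u - c u) / l ^ 2 := by
    filter_upwards [hmem] with u hu using hb2 u hu
  rw [heq2.deriv_eq]
  have hdivz : DifferentiableAt ℂ (fun u => b u / u) z :=
    hbz.div differentiableAt_id hzne
  have hcz : DifferentiableAt ℂ c z := hc.differentiableAt hmem
  have hD : deriv (fun u => 2 * (b u / u - c u) / l ^ 2) z
      = 2 * (deriv (fun u => b u / u) z - deriv c z) / l ^ 2 := by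
    rw [deriv_div_const, deriv_const_mul _ (hdivz.fun_sub hcz), deriv_fun_sub hdivz hcz]
  rw [hD]
  have hdbz : deriv (fun u => b u / u) z = (deriv b z * z - b z * 1) / z ^ 2 := by
    rw [deriv_fun_div hbz differentiableAt_fun_id hzne, deriv_id'']
  have hcz' : deriv c z = -(a z - d z) / (l * z) := by
    rw [eq_div_iff (mul_ne_zero hl hzne)]
    have := e4 z hz
    linear_combination this
  have hbz' : deriv b z = (a z - d z) / l := hb1 z hz
  rw [hdbz, hcz', hbz']
  have hl2 : l ^ 2 ≠ 0 := pow_ne_zero _ hl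
  have hz2 : z ^ 2 ≠ 0 := pow_ne_zero _ hzne
  field_simp
  ring_nf
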